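/- Let A : ℝⁿ → ℝⁿ be a linear isometry that fixes P^⊥ pointwise and preserves the 2-plane P, let n₀ be a unit vector with n₀ = v + p (v ∈ P, p ∈ P^⊥), set n₁ = A(n₀), and let θ ∈ [0,π) satisfy cos θ = n₀·n₁ with n₁ ≠ −n₀. Then for all t ∈ ℝ the Lorentzian geodesic between z₀ = (n₀, c₀ε) and z₁ = (A(n₀), c₀ε) is given by the pseudo-rotation formula γ(t) = ( λ(t,θ) A(v) + λ(1−t,θ) v + μ(1−2t, θ/2) p , μ(1−2t, θ/2) c₀ ε ). -/

import Mathlib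

open RealInnerProductSpace

/-- The function `λ(x,θ)`: `sin(xθ)/sin(θ)` for `θ ≠ 0`, and `x` for `θ = 0`. -/
noncomputable def lam (x θ : ℝ) : ℝ := if θ = 0 then x else Real.sin (x * θ) / Real.sin θ

/-- The function `μ(x,θ) = cos(xθ)/cos(θ)`. -/
noncomputable def mu (x θ : ℝ) : ℝ := Real.cos (x * θ) / Real.cos θ

/-- The point `(u, cε) = (u₁, …, u_n, c, c) ∈ ℝ^{n+2}`. -/
noncomputable def emb {n : ℕ} (u : EuclideanSpace ℝ (Fin n)) (c : ℝ) : Fin (n + 2) → ℝ :=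
  fun i => if h : (i : ℕ) < n then u ⟨i, h⟩ else c

/-- Pseudo-rotation formula: for a linear isometry `A` fixing `P^⊥` pointwise and preserving the
2-plane `P`, a unit vector `n₀ = v + p` (`v ∈ P`, `p ∈ P^⊥`), `n₁ = A n₀`, and `θ ∈ [0,π)` with
`cos θ = n₀·n₁`, `n₁ ≠ −n₀`, the Lorentzian geodesic between `z₀ = (n₀, c₀ε)` and
`z₁ = (A n₀, c₀ε)` is
`γ(t) = (λ(t,θ) A(v) + λ(1−t,θ) v + μ(1−2t, θ/2) p, μ(1−2t, θ/2) c₀ ε)`. -/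
theorem pseudo_rotation_formula {n : ℕ}
    (P : Submodule ℝ (EuclideanSpace ℝ (Fin n))) (hP : Module.finrank ℝ P = 2)
    (A : EuclideanSpace ℝ (Fin n) ≃ₗᵢ[ℝ] EuclideanSpace ℝ (Fin n))
    (hfix : ∀ q ∈ Pᗮ, A q = q)
    (hpres : ∀ w ∈ P, A w ∈ P)
    (n₀ n₁ v p : EuclideanSpace ℝ (Fin n)) (c₀ : ℝ)
    (hn₀ : ‖n₀‖ = 1) (hv : v ∈ P) (hp : p ∈ Pᗮ) (hsum : n₀ = v + p)
    (hn₁ : n₁ = A n₀) (hne : n₁ ≠ -n₀)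
    (θ : ℝ) (hθ : θ ∈ Set.Ico 0 Real.pi) (hcos : Real.cos θ = ⟪n₀, n₁⟫) :
    ∀ t : ℝ,
      lam t θ • emb n₁ c₀ + lam (1 - t) θ • emb n₀ c₀ =
        emb (lam t θ • A v + lam (1 - t) θ • v + mu (1 - 2 * t) (θ / 2) • p)
          (mu (1 - 2 * t) (θ / 2) * c₀) := by
  intro t
  -- Key scalar identity: λ(t,θ) + λ(1−t,θ) = μ(1−2t, θ/2).
  have key : lam t θ + lam (1 - t) θ = mu (1 - 2 * t) (θ / 2) := by
    rcases eq_or_ne θ 0 with h0 | h0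
    · simp [lam, mu, h0]
    · have hθpos : 0 < θ := lt_of_le_of_ne hθ.1 (Ne.symm h0)
      have hsin : Real.sin θ > 0 := Real.sin_pos_of_pos_of_lt_pi hθpos hθ.2
      have hhalf1 : 0 < θ / 2 := by linarith
      have hhalf2 : θ / 2 < Real.pi / 2 := by linarith [hθ.2]
      have hsinh : Real.sin (θ / 2) > 0 :=
        Real.sin_pos_of_pos_of_lt_pi hhalf1 (by linarith [Real.pi_pos])
      have hcosh : Real.cos (θ / 2) > 0 := Real.cos_pos_of_mem_Ioo ⟨by linarith, hhalf2⟩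
      have hsum' : Real.sin (t * θ) + Real.sin ((1 - t) * θ) =
          2 * Real.sin (θ / 2) * Real.cos ((1 - 2 * t) * (θ / 2)) := by
        have aux : ∀ x y : ℝ, Real.sin (x + y) + Real.sin (x - y) =
            2 * Real.sin x * Real.cos y := fun x y => by
          rw [Real.sin_add, Real.sin_sub]; ring
        rw [show t * θ = θ / 2 + (2 * t - 1) * (θ / 2) by ring,
          show (1 - t) * θ = θ / 2 - (2 * t - 1) * (θ / 2) by ring, aux,
          show (1 - 2 * t) * (θ / 2) = -((2 * t - 1) * (θ / 2)) by ring, Real.cos_neg]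
      have hsinθ : Real.sin θ = 2 * Real.sin (θ / 2) * Real.cos (θ / 2) := by
        have := Real.sin_two_mul (θ / 2)
        rw [show 2 * (θ / 2) = θ by ring] at this
        linarith
      simp only [lam, mu, h0, if_false]
      rw [← add_div, hsum', hsinθ]
      rw [div_eq_div_iff (by positivity) (ne_of_gt hcosh)]
      ring
  have hAp : A p = p := hfix p hp
  have hn₁' : n₁ = A v + p := by
    rw [hn₁, hsum, map_add, hAp]
  funext i
  by_cases h : (i : ℕ) < n
  · simp only [emb, Pi.add_apply, Pi.smul_apply, smul_eq_mul, dif_pos h, hn₁', hsum,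
      PiLp.add_apply, PiLp.smul_apply, smul_eq_mul]
    linear_combination (p ⟨(i : ℕ), h⟩) * key
  · simp only [emb, Pi.add_apply, Pi.smul_apply, smul_eq_mul, dif_neg h]
    linear_combination c₀ * key
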